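/- Irreducible quaternionic group actions give tight frames: let G be a finite group and ρ : G → ℍ^{d×d} a group homomorphism into unitary quaternionic matrices (ρ(g)ᴴ·ρ(g) = I_d for all g). Suppose the action is irreducible: for every nonzero v ∈ ℍ^d, the orbit {ρ(g)·v : g ∈ G} spans ℍ^d under right quaternionic scalar multiplication (its span as a right ℍ-submodule is all of ℍ^d). Then for every nonzero v ∈ ℍ^d the orbit (ρ(g)·v)_{g∈G} is a tight frame: for all x ∈ ℍ^d, ∑_{g∈G} (ρ(g)·v)·⟨x, ρ(g)·v⟩ = (|G|·‖v‖²/d)·x. -/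

import Mathlib

open Quaternion Matrix BigOperators

/-- Euclidean inner product on `ℍ^d`. -/
noncomputable def qip {d : ℕ} (v w : Fin d → ℍ[ℝ]) : ℍ[ℝ] :=
  ∑ i, star (w i) * v i

/-- Squared Euclidean norm on `ℍ^d`, a nonnegative real. -/
noncomputable def nsq {d : ℕ} (v : Fin d → ℍ[ℝ]) : ℝ :=
  ∑ i, Quaternion.normSq (v i)

private lemma re_mul_comm (a b : ℍ[ℝ]) : (a * b).re = (b * a).re := by
  simp [Quaternion.re_mul]; ring

/-- unitary matrices preserve qip -/
private lemma qip_mulVec {d : ℕ} (M : Matrix (Fin d) (Fin d) ℍ[ℝ]) (hM : Mᴴ * M = 1)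
    (v w : Fin d → ℍ[ℝ]) : qip (M.mulVec v) (M.mulVec w) = qip v w := by
  have key : ∀ j k, ∑ i, star (M i j) * M i k = (1 : Matrix (Fin d) (Fin d) ℍ[ℝ]) j k := by
    intro j k
    have := congrFun (congrFun hM j) k
    simpa [Matrix.mul_apply, Matrix.conjTranspose_apply] using this
  unfold qip
  calc ∑ i, star ((M.mulVec w) i) * (M.mulVec v) i
      = ∑ i, ∑ j, ∑ k, star (M i j * w j) * (M i k * v k) := by
        simp only [Matrix.mulVec, dotProduct, star_sum, Finset.sum_mul, Finset.mul_sum]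
        exact Finset.sum_congr rfl fun i _ => Finset.sum_comm
    _ = ∑ j, ∑ k, ∑ i, star (M i j * w j) * (M i k * v k) := by
        rw [Finset.sum_comm]
        exact Finset.sum_congr rfl fun j _ => Finset.sum_comm
    _ = ∑ j, ∑ k, star (w j) * ((1 : Matrix (Fin d) (Fin d) ℍ[ℝ]) j k * v k) := by
        refine Finset.sum_congr rfl fun j _ => Finset.sum_congr rfl fun k _ => ?_
        rw [← key j k]
        simp only [Finset.sum_mul, Finset.mul_sum]
        refine Finset.sum_congr rfl fun i _ => ?_
        rw [StarMul.star_mul]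
        simp [mul_assoc]
    _ = ∑ j, star (w j) * v j := by
        refine Finset.sum_congr rfl fun j _ => ?_
        rw [Finset.sum_eq_single j]
        · simp
        · intro b _ hb; simp [Matrix.one_apply_ne (Ne.symm hb)]
        · intro h; exact absurd (Finset.mem_univ j) h

private lemma qip_self {d : ℕ} (w : Fin d → ℍ[ℝ]) : qip w w = ((nsq w : ℝ) : ℍ[ℝ]) := by
  unfold qip nsq
  rw [show ((∑ i, Quaternion.normSq (w i) : ℝ) : ℍ[ℝ])
      = ∑ i, ((Quaternion.normSq (w i) : ℝ) : ℍ[ℝ]) by rw [← Quaternion.algebraMap_def]; exact map_sum (algebraMap ℝ ℍ[ℝ]) _ _]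
  exact Finset.sum_congr rfl fun i _ => by rw [Quaternion.star_mul_self]

set_option maxHeartbeats 2000000 in
theorem irreducible_group_action_tight_frame (d : ℕ) (G : Type*) [Group G] [Fintype G]
    (ρ : G →* Matrix (Fin d) (Fin d) ℍ[ℝ])
    (hunitary : ∀ g, (ρ g)ᴴ * ρ g = 1)
    (hirred : ∀ v : Fin d → ℍ[ℝ], v ≠ 0 →
      ∀ x : Fin d → ℍ[ℝ], ∃ c : G → ℍ[ℝ],
        x = ∑ g, (fun i => ((ρ g).mulVec v) i * c g))
    (v : Fin d → ℍ[ℝ]) (hv : v ≠ 0) :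
    ∀ x : Fin d → ℍ[ℝ],
      (fun i => ∑ g, ((ρ g).mulVec v) i * qip x ((ρ g).mulVec v)) =
        (((Fintype.card G : ℝ) * nsq v) / (d : ℝ)) • x := by
  have hd : 0 < d := by
    rcases Nat.eq_zero_or_pos d with h | h
    · subst h; exact absurd (funext fun i => i.elim0) hv
    · exact h
  set u : G → Fin d → ℍ[ℝ] := fun g => (ρ g).mulVec v with hu_def
  set A : Matrix (Fin d) (Fin d) ℍ[ℝ] := Matrix.of (fun i j => ∑ g, u g i * star (u g j))
    with hA_def
  have hAij : ∀ i j, A i j = ∑ g, u g i * star (u g j) := fun i j => rfl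
  -- adjoint of ρ h is ρ h⁻¹
  have hAdj : ∀ h : G, (ρ h)ᴴ = ρ h⁻¹ := by
    intro h
    have h1 : ρ h * ρ h⁻¹ = 1 := by rw [← _root_.map_mul, mul_inv_cancel, _root_.map_one]
    calc (ρ h)ᴴ = (ρ h)ᴴ * (ρ h * ρ h⁻¹) := by rw [h1, mul_one]
      _ = ((ρ h)ᴴ * ρ h) * ρ h⁻¹ := by rw [mul_assoc]
      _ = ρ h⁻¹ := by rw [hunitary, one_mul]
  have humul : ∀ h g : G, (ρ h).mulVec (u g) = u (h * g) := by
    intro h g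
    rw [hu_def]
    simp only [Matrix.mulVec_mulVec]
    rw [_root_.map_mul]
  -- frame operator is mulVec by A
  have hframe : ∀ (x : Fin d → ℍ[ℝ]) (i : Fin d),
      ∑ g, u g i * qip x (u g) = A.mulVec x i := by
    intro x i
    unfold qip
    simp only [Matrix.mulVec, dotProduct, hAij, Finset.sum_mul, Finset.mul_sum]
    rw [Finset.sum_comm]
    exact Finset.sum_congr rfl fun j _ => Finset.sum_congr rfl fun g _ => by
      rw [mul_assoc]
  -- A commutes with the representation
  have hcomm : ∀ h : G, ρ h * A = A * ρ h := by
    intro h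
    funext i j
    have lhs : (ρ h * A) i j = ∑ g, u (h * g) i * star (u g j) := by
      rw [Matrix.mul_apply]
      simp only [hAij, Finset.mul_sum]
      rw [Finset.sum_comm]
      refine Finset.sum_congr rfl fun g _ => ?_
      rw [← humul h g]
      simp only [Matrix.mulVec, dotProduct, Finset.sum_mul]
      exact Finset.sum_congr rfl fun k _ => by rw [mul_assoc]
    have rhs : (A * ρ h) i j = ∑ g, u g i * star (u (h⁻¹ * g) j) := by
      rw [Matrix.mul_apply]
      simp only [hAij, Finset.sum_mul]
      rw [Finset.sum_comm]
      refine Finset.sum_congr rfl fun g _ => ?_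
      rw [← humul h⁻¹ g]
      have : star (((ρ h⁻¹).mulVec (u g)) j) = ∑ k, star (u g k) * (ρ h) k j := by
        simp only [Matrix.mulVec, dotProduct, star_sum]
        refine Finset.sum_congr rfl fun k _ => ?_
        rw [StarMul.star_mul]
        congr 1
        rw [← hAdj h]
        simp [Matrix.conjTranspose_apply]
      rw [this, Finset.mul_sum]
      exact Finset.sum_congr rfl fun k _ => by rw [mul_assoc]
    rw [lhs, rhs]
    exact Fintype.sum_equiv (Equiv.mulLeft h) _ _ (fun g => by simp)
  -- A is Hermitian entrywise
  have hHerm : ∀ i j, star (A i j) = A j i := by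
    intro i j
    simp only [hAij, star_sum]
    exact Finset.sum_congr rfl fun g _ => by rw [StarMul.star_mul, star_star]
  -- view the frame operator as a symmetric real-linear operator
  have resum : ∀ {α : Type} (s : Finset α) (f : α → ℍ[ℝ]),
      (∑ j ∈ s, f j).re = ∑ j ∈ s, (f j).re := fun s f =>
    map_sum (QuaternionAlgebra.reₗ (R := ℝ) (-1) 0 (-1)) f s
  haveI : Nontrivial (PiLp 2 (fun _ : Fin d => ℍ[ℝ])) :=
    ⟨0, WithLp.toLp 2 (fun _ => 1), fun h => one_ne_zero (congrArg (fun z : PiLp 2 (fun _ : Fin d => ℍ[ℝ]) => WithLp.ofLp z ⟨0, hd⟩) h.symm)⟩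
  set T : PiLp 2 (fun _ : Fin d => ℍ[ℝ]) →ₗ[ℝ] PiLp 2 (fun _ : Fin d => ℍ[ℝ]) :=
    { toFun := fun x => WithLp.toLp 2 (A.mulVec x),
      map_add' := fun x y => congrArg (WithLp.toLp 2) (Matrix.mulVec_add A x y),
      map_smul' := fun c x => congrArg (WithLp.toLp 2) (Matrix.mulVec_smul A c x) } with hT_def
  have hsym : T.IsSymmetric := by
    intro x y
    simp only [PiLp.inner_apply, Quaternion.inner_def, hT_def, LinearMap.coe_mk, AddHom.coe_mk]
    calc ∑ i, ((A.mulVec x) i * star (y i)).re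
        = ∑ i, ∑ j, (A i j * x j * star (y i)).re := by
          refine Finset.sum_congr rfl fun i _ => ?_
          rw [show (A.mulVec x) i * star (y i) = ∑ j, A i j * x j * star (y i) by
            simp only [Matrix.mulVec, dotProduct, Finset.sum_mul]]
          exact resum _ _
      _ = ∑ j, ∑ i, (x j * star (y i) * A i j).re := by
          rw [Finset.sum_comm]
          refine Finset.sum_congr rfl fun j _ => Finset.sum_congr rfl fun i _ => ?_
          rw [mul_assoc]
          exact re_mul_comm _ _
      _ = ∑ i, (x i * star ((A.mulVec y) i)).re := by
          refine Finset.sum_congr rfl fun i _ => ?_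
          have hst : star ((A.mulVec y) i) = ∑ j, star (y j) * A j i := by
            simp only [Matrix.mulVec, dotProduct, star_sum]
            exact Finset.sum_congr rfl fun j _ => by rw [StarMul.star_mul, hHerm]
          rw [hst, Finset.mul_sum,
            show ((∑ j, x i * (star (y j) * A j i)).re)
              = ∑ j, (x i * (star (y j) * A j i)).re from resum _ _]
          exact Finset.sum_congr rfl fun j _ => by rw [mul_assoc]
  obtain ⟨μ, hμ⟩ : ∃ μ : ℝ, Module.End.HasEigenvalue T μ :=
    ⟨_, hsym.hasEigenvalue_iSup_of_finiteDimensional⟩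
  obtain ⟨y₀, hy₀⟩ := hμ.exists_hasEigenvector
  obtain ⟨x₀, hx₀ne, hx₀v⟩ : ∃ y : Fin d → ℍ[ℝ], y ≠ 0 ∧ A.mulVec y = μ • y :=
    ⟨y₀.ofLp, by simpa using hy₀.2, congrArg WithLp.ofLp hy₀.apply_eq_smul⟩
  clear hy₀ y₀
  -- A acts as μ on everything, by irreducibility
  have heig : ∀ x : Fin d → ℍ[ℝ], A.mulVec x = μ • x := by
    intro x
    obtain ⟨c, hc⟩ := hirred x₀ hx₀ne x
    have hAg : ∀ g : G, A.mulVec ((ρ g).mulVec x₀) = μ • ((ρ g).mulVec x₀) := by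
      intro g
      rw [Matrix.mulVec_mulVec, ← hcomm g, ← Matrix.mulVec_mulVec, hx₀v, Matrix.mulVec_smul]
    funext i
    rw [hc]
    calc (A.mulVec (∑ g : G, fun i' => ((ρ g).mulVec x₀) i' * c g)) i
        = ∑ j, A i j * ∑ g : G, ((ρ g).mulVec x₀) j * c g := by
          rw [show (A.mulVec (∑ g : G, fun i' => ((ρ g).mulVec x₀) i' * c g)) i
              = ∑ j, A i j * (∑ g : G, fun i' => ((ρ g).mulVec x₀) i' * c g) j from rfl]
          exact Finset.sum_congr rfl fun j _ => by rw [Finset.sum_apply]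
      _ = ∑ g : G, ∑ j, A i j * (((ρ g).mulVec x₀) j * c g) := by
          simp only [Finset.mul_sum]
          exact Finset.sum_comm
      _ = ∑ g : G, (A.mulVec ((ρ g).mulVec x₀)) i * c g := by
          refine Finset.sum_congr rfl fun g _ => ?_
          rw [show (A.mulVec ((ρ g).mulVec x₀)) i = ∑ j, A i j * ((ρ g).mulVec x₀) j from rfl,
            Finset.sum_mul]
          exact Finset.sum_congr rfl fun j _ => (mul_assoc _ _ _).symm
      _ = ∑ g : G, μ • (((ρ g).mulVec x₀) i * c g) := by
          refine Finset.sum_congr rfl fun g _ => ?_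
          rw [hAg g, Pi.smul_apply, smul_mul_assoc]
      _ = (μ • ∑ g : G, fun i' => ((ρ g).mulVec x₀) i' * c g) i := by
          rw [Pi.smul_apply, Finset.sum_apply, Finset.smul_sum]
  -- identify μ via the trace
  have hdiag : ∀ j : Fin d, A j j = ((μ : ℝ) : ℍ[ℝ]) := by
    intro j
    have h := congrFun (heig (Pi.single j 1)) j
    have hL : (A.mulVec (Pi.single j (1 : ℍ[ℝ]))) j = A j j := by
      simp [Matrix.mulVec, dotProduct, Pi.single_apply]
    have hR : (μ • (Pi.single j (1 : ℍ[ℝ]) : Fin d → ℍ[ℝ])) j = ((μ : ℝ) : ℍ[ℝ]) := by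
      rw [Pi.smul_apply, Pi.single_eq_same, ← Quaternion.coe_one, Quaternion.smul_coe]
      norm_num
    rw [hL, hR] at h
    exact h
  have hnsq : ∀ g : G, nsq (u g) = nsq v := by
    intro g
    have h := qip_mulVec (ρ g) (hunitary g) v v
    rw [qip_self, qip_self] at h
    exact Quaternion.coe_injective h
  have hsum_self : ∀ w : Fin d → ℍ[ℝ], ∑ j, w j * star (w j) = ((nsq w : ℝ) : ℍ[ℝ]) := by
    intro w
    rw [show ((nsq w : ℝ) : ℍ[ℝ]) = ∑ j, ((Quaternion.normSq (w j) : ℝ) : ℍ[ℝ]) from by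
      rw [nsq, ← Quaternion.algebraMap_def]
      exact map_sum (algebraMap ℝ ℍ[ℝ]) _ _]
    exact Finset.sum_congr rfl fun j _ => by rw [Quaternion.self_mul_star]
  have htr : (d : ℝ) * μ = (Fintype.card G : ℝ) * nsq v := by
    have h1 : ∑ j : Fin d, A j j = (((d : ℝ) * μ : ℝ) : ℍ[ℝ]) := by
      rw [Finset.sum_congr rfl fun j _ => hdiag j, Finset.sum_const, Finset.card_univ,
        Fintype.card_fin, nsmul_eq_mul, ← Quaternion.coe_natCast, ← Quaternion.coe_mul]
    have h2 : ∑ j : Fin d, A j j = (((Fintype.card G : ℝ) * nsq v : ℝ) : ℍ[ℝ]) := by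
      calc ∑ j : Fin d, A j j = ∑ g : G, ∑ j : Fin d, u g j * star (u g j) := by
            simp only [hAij]
            exact Finset.sum_comm
        _ = ∑ _g : G, ((nsq v : ℝ) : ℍ[ℝ]) := by
            refine Finset.sum_congr rfl fun g _ => ?_
            rw [hsum_self (u g), hnsq g]
        _ = (((Fintype.card G : ℝ) * nsq v : ℝ) : ℍ[ℝ]) := by
            rw [Finset.sum_const, Finset.card_univ, nsmul_eq_mul, ← Quaternion.coe_natCast,
              ← Quaternion.coe_mul]
    exact Quaternion.coe_injective (h1.symm.trans h2)
  have hdne : (d : ℝ) ≠ 0 := Nat.cast_ne_zero.mpr hd.ne'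
  have hμval : ((Fintype.card G : ℝ) * nsq v) / (d : ℝ) = μ := by
    rw [← htr]
    field_simp
  intro x
  funext i
  rw [hframe x i, congrFun (heig x) i, hμval]
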